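/- The semigroup free product of two trivial semigroups, i.e., the semigroup presented by ⟨e, f | e² = e, f² = f⟩, is right noetherian. -/

import Mathlib

/-- A right congruence on a semigroup: an equivalence relation compatible with
right multiplication. -/
def IsRightCongruence {S : Type*} [Semigroup S] (r : S → S → Prop) : Prop :=
  Equivalence r ∧ ∀ a b c : S, r a b → r (a * c) (b * c)

/-- A right congruence is finitely generated if it is the least right congruence
containing some finite set of pairs. -/
def IsFGRightCongruence {S : Type*} [Semigroup S] (r : S → S → Prop) : Prop :=
  IsRightCongruence r ∧ ∃ X : Finset (S × S),
    (∀ p ∈ X, r p.1 p.2) ∧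
    ∀ r' : S → S → Prop, IsRightCongruence r' → (∀ p ∈ X, r' p.1 p.2) →
      ∀ a b : S, r a b → r' a b

/-- A semigroup is right noetherian if every right congruence on it is finitely
generated. -/
def RightNoetherian (S : Type*) [Semigroup S] : Prop :=
  ∀ r : S → S → Prop, IsRightCongruence r → IsFGRightCongruence r

/-- The defining relations of the presentation `⟨e, f | e² = e, f² = f⟩`,
with `e = of true` and `f = of false` in the free semigroup on two generators. -/
def idempotentRel : FreeSemigroup Bool → FreeSemigroup Bool → Prop := fun x y =>
  (x = FreeSemigroup.of true * FreeSemigroup.of true ∧ y = FreeSemigroup.of true) ∨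
  (x = FreeSemigroup.of false * FreeSemigroup.of false ∧ y = FreeSemigroup.of false)

namespace RNP


def lastL (b : Bool) (n : ℕ) : Bool := if n % 2 = 1 then !b else b

lemma lastL_succ (b : Bool) (n : ℕ) : lastL b (n+1) = !(lastL b n) := by
  unfold lastL
  rcases Nat.mod_two_eq_zero_or_one n with h | h <;>
    simp [h, Nat.add_mod, *]

lemma lastL_parity (b : Bool) {m n : ℕ} (h : m % 2 = n % 2) : lastL b m = lastL b n := by
  unfold lastL; rw [h]

@[ext] structure Sg where
  b : Bool
  n : ℕ
deriving DecidableEq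

lemma lastL_add (b c : Bool) (m n : ℕ) :
    lastL b (m + n + if lastL b m = c then 0 else 1) = lastL c n := by
  unfold lastL
  rcases Nat.mod_two_eq_zero_or_one m with h | h <;>
    rcases Nat.mod_two_eq_zero_or_one n with h' | h' <;>
      cases b <;> cases c <;>
        simp +decide [h, h', Nat.add_mod]

def smul (x y : Sg) : Sg := ⟨x.b, x.n + y.n + if lastL x.b x.n = y.b then 0 else 1⟩

lemma smul_assoc (x y z : Sg) : smul (smul x y) z = smul x (smul y z) := by
  unfold smul
  rw [Sg.mk.injEq]
  refine ⟨rfl, ?_⟩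
  simp only
  rw [lastL_add]
  split_ifs <;> omega

instance : Semigroup Sg where
  mul := smul
  mul_assoc := smul_assoc

lemma mul_def (x y : Sg) :
    x * y = ⟨x.b, x.n + y.n + if lastL x.b x.n = y.b then 0 else 1⟩ := rfl

lemma mul_last (b : Bool) (n : ℕ) : (⟨b,n⟩ : Sg) * ⟨lastL b n, 0⟩ = ⟨b, n⟩ := by
  simp [mul_def]

lemma mul_not_last (b c : Bool) (n : ℕ) (h : lastL b n ≠ c) :
    (⟨b,n⟩ : Sg) * ⟨c, 0⟩ = ⟨b, n+1⟩ := by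
  simp [mul_def, h]

section Steps

variable {s : Sg → Sg → Prop} (hs : IsRightCongruence s) {b c : Bool} {m n : ℕ}
include hs

lemma step_eq (h : s ⟨b,m⟩ ⟨c,n⟩) (hL : lastL b m = lastL c n) :
    s ⟨b,m+1⟩ ⟨c,n+1⟩ := by
  have h2 := hs.2 _ _ ⟨!(lastL b m), 0⟩ h
  rwa [mul_not_last b _ m (by simp), hL, mul_not_last c _ n (by simp)] at h2

lemma step_ne (h : s ⟨b,m⟩ ⟨c,n⟩) (hL : lastL b m ≠ lastL c n) :
    s ⟨b,m⟩ ⟨c,n+1⟩ := by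
  have h2 := hs.2 _ _ ⟨lastL b m, 0⟩ h
  rwa [mul_last, mul_not_last c _ n (Ne.symm hL)] at h2

omit hs in
lemma lastL_shift (hL : lastL b m = lastL c n) (k : ℕ) :
    lastL b (m+k) = lastL c (n+k) := by
  induction k with
  | zero => exact hL
  | succ k ih => rw [← Nat.add_assoc, ← Nat.add_assoc, lastL_succ, lastL_succ, ih]

lemma shift_eq (h : s ⟨b,m⟩ ⟨c,n⟩) (hL : lastL b m = lastL c n) (k : ℕ) :
    s ⟨b,m+k⟩ ⟨c,n+k⟩ := by
  induction k with
  | zero => exact h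
  | succ k ih =>
    rw [← Nat.add_assoc, ← Nat.add_assoc]
    exact step_eq hs ih (lastL_shift hL k)

lemma adj (h : s ⟨b,m⟩ ⟨c,n⟩) (hL : lastL b m ≠ lastL c n) :
    s ⟨c,n⟩ ⟨c,n+1⟩ :=
  hs.1.trans (hs.1.symm h) (step_ne hs h hL)

lemma adj_prop (h : s ⟨b,m⟩ ⟨b,m+1⟩) (k : ℕ) : s ⟨b,m+k⟩ ⟨b,m+k+1⟩ := by
  induction k with
  | zero => exact h
  | succ k ih =>
    have hL : lastL b (m+k) ≠ lastL b (m+k+1) := by simp [lastL_succ]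
    have h2 : s ⟨b,m+k⟩ ⟨b,m+k+2⟩ := step_ne hs ih hL
    exact hs.1.trans (hs.1.symm ih) h2

lemma shift_ge {m0 p : ℕ} (hw : s ⟨b,m0⟩ ⟨b,m0+p⟩) (hp : p = 1 ∨ p % 2 = 0)
    (hn : m0 ≤ n) : s ⟨b,n⟩ ⟨b,n+p⟩ := by
  obtain ⟨k, rfl⟩ : ∃ k, n = m0 + k := ⟨n - m0, by omega⟩
  rcases hp with rfl | hp
  · exact adj_prop hs hw k
  · have hL : lastL b m0 = lastL b (m0+p) := lastL_parity b (by omega)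
    have h2 := shift_eq hs hw hL k
    have e : m0 + p + k = m0 + k + p := by omega
    rwa [e] at h2

end Steps


lemma lastL_eq_iff (b : Bool) (m n : ℕ) : lastL b m = lastL b n ↔ m % 2 = n % 2 := by
  unfold lastL
  rcases Nat.mod_two_eq_zero_or_one m with h | h <;>
    rcases Nat.mod_two_eq_zero_or_one n with h' | h' <;>
      cases b <;> simp [h, h']

section Data

variable (r : Sg → Sg → Prop)

def Pgap (b : Bool) (p : ℕ) : Prop := 0 < p ∧ ∃ m, r ⟨b,m⟩ ⟨b,m+p⟩

def Cross1 (m : ℕ) : Prop := ∃ n, r ⟨true,m⟩ ⟨false,n⟩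

def Cross2 (n : ℕ) : Prop := ∃ m, r ⟨true,m⟩ ⟨false,n⟩

noncomputable def pm (b : Bool) : ℕ := sInf {p | Pgap r b p}

noncomputable def m0 (b : Bool) : ℕ :=
  @dite _ (∃ p, Pgap r b p) (Classical.propDecidable _)
    (fun h => Classical.choose (Nat.sInf_mem h).2) (fun _ => 0)

noncomputable def mu : ℕ := sInf {m | Cross1 r m}

noncomputable def nu : ℕ :=
  @dite _ (∃ m, Cross1 r m) (Classical.propDecidable _)
    (fun h => Classical.choose (Nat.sInf_mem h)) (fun _ => 0)

noncomputable def nu' : ℕ := sInf {n | Cross2 r n}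

noncomputable def mu' : ℕ :=
  @dite _ (∃ n, Cross2 r n) (Classical.propDecidable _)
    (fun h => Classical.choose (Nat.sInf_mem h)) (fun _ => 0)

noncomputable def gM : ℕ :=
  (pm r true + m0 r true) + (pm r false + m0 r false) + (mu r + nu r) + (nu' r + mu' r)

variable {r}

lemma wit_spec {b : Bool} (h : ∃ p, Pgap r b p) :
    r ⟨b, m0 r b⟩ ⟨b, m0 r b + pm r b⟩ := by
  rw [m0, dif_pos h]
  exact Classical.choose_spec (Nat.sInf_mem h).2

lemma pm_pos {b : Bool} (h : ∃ p, Pgap r b p) : 0 < pm r b := (Nat.sInf_mem h).1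

lemma pm_le {b : Bool} {p : ℕ} (hp : Pgap r b p) : pm r b ≤ p := Nat.sInf_le hp

lemma cross1_wit (h : ∃ m, Cross1 r m) : r ⟨true, mu r⟩ ⟨false, nu r⟩ := by
  rw [nu, dif_pos h]
  exact Classical.choose_spec (Nat.sInf_mem h)

lemma mu_le {m : ℕ} (h' : Cross1 r m) : mu r ≤ m := Nat.sInf_le h'

lemma cross2_wit (h : ∃ n, Cross2 r n) : r ⟨true, mu' r⟩ ⟨false, nu' r⟩ := by
  rw [mu', dif_pos h]
  exact Classical.choose_spec (Nat.sInf_mem h)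

lemma nu'_le {n : ℕ} (h' : Cross2 r n) : nu' r ≤ n := Nat.sInf_le h'

lemma gB_le_gM (b : Bool) : pm r b + m0 r b ≤ gM r := by
  cases b <;> (unfold gM; omega)

lemma gC1_le_gM : mu r + nu r ≤ gM r := by unfold gM; omega

lemma gC2_le_gM : nu' r + mu' r ≤ gM r := by unfold gM; omega

end Data

theorem model_rn : RightNoetherian Sg := by
  intro r hr
  have mkgap : ∀ (b : Bool) (m n : ℕ), m ≠ n → r ⟨b,m⟩ ⟨b,n⟩ → ∃ p, Pgap r b p := by
    intro b m n hne h
    rcases Nat.lt_or_ge m n with hlt | hge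
    · refine ⟨n - m, by omega, m, ?_⟩
      have e : m + (n-m) = n := by omega
      rw [e]; exact h
    · refine ⟨m - n, by omega, n, ?_⟩
      have e : n + (m-n) = m := by omega
      rw [e]; exact hr.1.symm h
  set M := gM r with hM
  have h1 : {x : Sg | x.n ≤ M}.Finite := by
    have hsub : {x : Sg | x.n ≤ M} ⊆ (fun p : Bool × ℕ => Sg.mk p.1 p.2) ''
        (Set.univ ×ˢ Set.Iic M) := by
      rintro ⟨b,n⟩ h
      exact ⟨(b,n), by simpa using h, rfl⟩
    exact ((Set.finite_univ.prod (Set.finite_Iic M)).image _).subset hsub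
  have hfin : {q : Sg × Sg | r q.1 q.2 ∧ q.1.n ≤ M ∧ q.2.n ≤ M}.Finite :=
    ((h1.prod h1).subset (by rintro ⟨x,y⟩ ⟨_,h2,h3⟩; exact ⟨h2,h3⟩))
  refine ⟨hr, hfin.toFinset, fun p hp => ((Set.Finite.mem_toFinset hfin).1 hp).1, ?_⟩
  intro r' hr' hmem a1 a2 hab
  have hmem' : ∀ x y : Sg, r x y → x.n ≤ M → y.n ≤ M → r' x y := fun x y h h1 h2 =>
    hmem (x,y) ((Set.Finite.mem_toFinset hfin).2 ⟨h,h1,h2⟩)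
  have key : ∀ N (x y : Sg), x.n + y.n ≤ N → r x y → r' x y := by
    intro N
    induction N using Nat.strong_induction_on with
    | _ N IH =>
    have red : ∀ (c : Bool) (m : ℕ) (b : Bool) (n : ℕ), m + n ≤ N → M < n →
        r ⟨c,m⟩ ⟨b,n⟩ → r' ⟨c,m⟩ ⟨b,n⟩ := by
      intro c m b n hsum hn hxy
      by_cases hxyeq : (⟨c,m⟩ : Sg) = ⟨b,n⟩
      · rw [hxyeq]; exact hr'.1.refl _
      by_cases hDb : ∃ p, Pgap r b p
      · -- reduce along chain b using minimal gap
        set p := pm r b with hp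
        set m₀ := m0 r b with hm₀
        have hw : r ⟨b,m₀⟩ ⟨b,m₀+p⟩ := wit_spec hDb
        have hppos : 0 < p := pm_pos hDb
        have hbd : p + m₀ ≤ M := hM ▸ gB_le_gM b
        have hp1 : p = 1 ∨ p % 2 = 0 := by
          rcases Nat.even_or_odd p with he | ho
          · exact Or.inr (Nat.even_iff.1 he)
          · left
            have hL : lastL b m₀ ≠ lastL b (m₀+p) := by
              rw [Ne, lastL_eq_iff]
              have := Nat.odd_iff.1 ho
              omega
            have hadj : r ⟨b,m₀+p⟩ ⟨b,m₀+p+1⟩ := adj hr hw hL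
            have : p ≤ 1 := pm_le ⟨one_pos, _, hadj⟩
            omega
        have e : n - p + p = n := by omega
        have hs1 : r ⟨b,n-p⟩ ⟨b,n⟩ := by
          have := shift_ge hr hw hp1 (show m₀ ≤ n - p by omega)
          rwa [e] at this
        have hxn' : r ⟨c,m⟩ ⟨b,n-p⟩ := hr.1.trans hxy (hr.1.symm hs1)
        have ih : r' ⟨c,m⟩ ⟨b,n-p⟩ :=
          IH (m + (n-p)) (by omega) _ _ le_rfl hxn'
        have hw' : r' ⟨b,m₀⟩ ⟨b,m₀+p⟩ := hmem' _ _ hw (show m₀ ≤ M by omega) (show m₀ + p ≤ M by omega)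
        have hs1' : r' ⟨b,n-p⟩ ⟨b,n⟩ := by
          have := shift_ge hr' hw' hp1 (show m₀ ≤ n - p by omega)
          rwa [e] at this
        exact hr'.1.trans ih hs1'
      · -- no gaps in chain b: cross pair with rigid structure
        have nogap : ∀ n1 n2 : ℕ, r ⟨b,n1⟩ ⟨b,n2⟩ → n1 = n2 := by
          intro n1 n2 h
          by_contra hne
          exact hDb (mkgap b n1 n2 hne h)
        have hc : c ≠ b := by
          intro hcb
          subst hcb
          exact hxyeq (by rw [nogap m n hxy])
        cases b
        · -- y in false chain, x = ⟨true, m⟩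
          have hc' : c = true := by cases c <;> simp_all
          subst hc'
          have hC : ∃ m', Cross1 r m' := ⟨m, n, hxy⟩
          have hμm : mu r ≤ m := mu_le ⟨n, hxy⟩
          have wit : r ⟨true, mu r⟩ ⟨false, nu r⟩ := cross1_wit hC
          have hL : lastL true m = lastL false n := by
            by_contra hL
            have := nogap _ _ (adj hr hxy hL)
            omega
          have hLw : lastL true (mu r) = lastL false (nu r) := by
            by_contra hL
            have := nogap _ _ (adj hr wit hL)
            omega
          have hsw : r ⟨true, mu r + (m - mu r)⟩ ⟨false, nu r + (m - mu r)⟩ :=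
            shift_eq hr wit hLw (m - mu r)
          have e : mu r + (m - mu r) = m := by omega
          rw [e] at hsw
          have hn_eq : n = nu r + (m - mu r) :=
            nogap _ _ (hr.1.trans (hr.1.symm hxy) hsw)
          have hbd : mu r + nu r ≤ M := hM ▸ gC1_le_gM
          have wit' : r' ⟨true, mu r⟩ ⟨false, nu r⟩ := hmem' _ _ wit (show mu r ≤ M by omega) (show nu r ≤ M by omega)
          have hsw' : r' ⟨true, mu r + (m - mu r)⟩ ⟨false, nu r + (m - mu r)⟩ :=
            shift_eq hr' wit' hLw (m - mu r)
          rw [e, ← hn_eq] at hsw'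
          exact hsw'
        · -- y in true chain, x = ⟨false, m⟩
          have hc' : c = false := by cases c <;> simp_all
          subst hc'
          have hyx : r ⟨true,n⟩ ⟨false,m⟩ := hr.1.symm hxy
          have hC : ∃ n', Cross2 r n' := ⟨m, n, hyx⟩
          have hνm : nu' r ≤ m := nu'_le ⟨n, hyx⟩
          have wit : r ⟨true, mu' r⟩ ⟨false, nu' r⟩ := cross2_wit hC
          have hL : lastL false m = lastL true n := by
            by_contra hL
            have := nogap _ _ (adj hr hxy hL)
            omega
          have hLw : lastL true (mu' r) = lastL false (nu' r) := by
            by_contra hL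
            have hL2 : lastL false (nu' r) ≠ lastL true (mu' r) := fun h => hL h.symm
            have := nogap _ _ (adj hr (hr.1.symm wit) hL2)
            omega
          have hsw : r ⟨true, mu' r + (m - nu' r)⟩ ⟨false, nu' r + (m - nu' r)⟩ :=
            shift_eq hr wit hLw (m - nu' r)
          have e : nu' r + (m - nu' r) = m := by omega
          rw [e] at hsw
          have hn_eq : n = mu' r + (m - nu' r) :=
            nogap _ _ (hr.1.trans hyx (hr.1.symm hsw))
          have hbd : nu' r + mu' r ≤ M := hM ▸ gC2_le_gM
          have wit' : r' ⟨true, mu' r⟩ ⟨false, nu' r⟩ := hmem' _ _ wit (show mu' r ≤ M by omega) (show nu' r ≤ M by omega)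
          have hsw' : r' ⟨true, mu' r + (m - nu' r)⟩ ⟨false, nu' r + (m - nu' r)⟩ :=
            shift_eq hr' wit' hLw (m - nu' r)
          rw [e, ← hn_eq] at hsw'
          exact hr'.1.symm hsw'
    intro x y hsum hxy
    obtain ⟨c,m⟩ := x
    obtain ⟨b,n⟩ := y
    have hsum' : m + n ≤ N := hsum
    by_cases hy : M < n
    · exact red c m b n hsum' hy hxy
    · by_cases hx : M < m
      · exact hr'.1.symm (red b n c m (by omega) hx (hr.1.symm hxy))
      · exact hmem' _ _ hxy (by simp; omega) (by simp; omega)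
  exact key (a1.n + a2.n) a1 a2 le_rfl hab

lemma lastL_not (b : Bool) (m : ℕ) : lastL (!b) m = !(lastL b m) := by
  unfold lastL; split_ifs <;> simp

-- the word map
def wrd : Bool → ℕ → FreeSemigroup Bool
  | b, 0 => FreeSemigroup.of b
  | b, n+1 => FreeSemigroup.of b * wrd (!b) n

def fh : FreeSemigroup Bool →ₙ* Sg := FreeSemigroup.lift (fun b => ⟨b, 0⟩)

lemma fh_of (b : Bool) : fh (FreeSemigroup.of b) = ⟨b,0⟩ := FreeSemigroup.lift_of _ _

lemma lastL_zero (b : Bool) : lastL b 0 = b := rfl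

lemma fh_wrd (b : Bool) (n : ℕ) : fh (wrd b n) = ⟨b, n⟩ := by
  induction n generalizing b with
  | zero => exact fh_of b
  | succ n ih =>
    rw [wrd, map_mul, fh_of, ih]
    simp [mul_def, lastL_zero]

abbrev cg : Con (FreeSemigroup Bool) := conGen idempotentRel

lemma cg_of_sq (b : Bool) : cg (FreeSemigroup.of b * FreeSemigroup.of b) (FreeSemigroup.of b) := by
  show ConGen.Rel idempotentRel _ _
  apply ConGen.Rel.of
  cases b
  · exact Or.inr ⟨rfl, rfl⟩
  · exact Or.inl ⟨rfl, rfl⟩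

lemma cg_absorb (b : Bool) (n : ℕ) : cg (FreeSemigroup.of b * wrd b n) (wrd b n) := by
  cases n with
  | zero => exact cg_of_sq b
  | succ n =>
    show cg (FreeSemigroup.of b * (FreeSemigroup.of b * wrd (!b) n)) _
    rw [← mul_assoc]
    exact cg.mul (cg_of_sq b) (cg.refl (wrd (!b) n))

lemma gm (b c : Bool) (m n : ℕ) :
    cg (wrd b (m + n + if lastL b m = c then 0 else 1)) (wrd b m * wrd c n) := by
  induction m generalizing b with
  | zero =>
    rw [lastL_zero]
    by_cases hc : b = c
    · subst hc
      simp only [if_pos rfl, Nat.zero_add, Nat.add_zero]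
      exact cg.symm (cg_absorb b n)
    · have hc' : c = !b := by cases b <;> cases c <;> simp_all
      subst hc'
      simp only [if_neg hc, Nat.zero_add]
      exact cg.refl _
  | succ m ih =>
    have hL : lastL b (m+1) = lastL (!b) m := by rw [lastL_succ, lastL_not]
    rw [hL]
    have e : m + 1 + n + (if lastL (!b) m = c then 0 else 1)
        = (m + n + (if lastL (!b) m = c then 0 else 1)) + 1 := by split_ifs <;> omega
    rw [e]
    show cg (FreeSemigroup.of b * wrd (!b) _) (FreeSemigroup.of b * wrd (!b) m * wrd c n)
    rw [mul_assoc]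
    exact cg.mul (cg.refl (FreeSemigroup.of b)) (ih (!b))

lemma fh_ker {x y : FreeSemigroup Bool} (h : idempotentRel x y) : fh x = fh y := by
  rcases h with ⟨rfl, rfl⟩ | ⟨rfl, rfl⟩ <;>
    simp [map_mul, fh_of, mul_def, lastL_zero]

lemma cg_le_ker : cg ≤ Con.ker fh :=
  Con.conGen_le.2 fun _ _ h => fh_ker h

noncomputable def F : cg.Quotient → Sg :=
  fun q => Con.liftOn q fh fun _ _ h => cg_le_ker h

lemma F_mk (w : FreeSemigroup Bool) : F (w : cg.Quotient) = fh w := rfl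

lemma F_mul (q1 q2 : cg.Quotient) : F (q1 * q2) = F q1 * F q2 := by
  induction q1 using Con.induction_on with
  | _ x =>
    induction q2 using Con.induction_on with
    | _ y =>
      rw [← Con.coe_mul, F_mk, F_mk, F_mk, map_mul]

noncomputable def E : cg.Quotient ≃* Sg where
  toFun := F
  invFun := fun s => ((wrd s.b s.n : FreeSemigroup Bool) : cg.Quotient)
  left_inv := by
    intro q
    induction q using Con.induction_on with
    | _ w =>
      rw [F_mk]
      induction w using FreeSemigroup.recOnMul with
      | ih1 b =>
        show ((wrd (fh (FreeSemigroup.of b)).b (fh (FreeSemigroup.of b)).n : FreeSemigroup Bool) : cg.Quotient) = _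
        rw [fh_of]
        rfl
      | ih2 a y _ hy =>
        show ((wrd (fh (FreeSemigroup.of a * y)).b (fh (FreeSemigroup.of a * y)).n : FreeSemigroup Bool) : cg.Quotient) = _
        have hy' : ((wrd (fh y).b (fh y).n : FreeSemigroup Bool) : cg.Quotient) = (y : cg.Quotient) := hy
        rw [map_mul, fh_of]
        have h1 : ((wrd ((⟨a,0⟩ * fh y : Sg).b) ((⟨a,0⟩ * fh y : Sg).n) : FreeSemigroup Bool) : cg.Quotient)
            = ((wrd a 0 * wrd (fh y).b (fh y).n : FreeSemigroup Bool) : cg.Quotient) := by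
          rw [Con.eq]
          exact gm a (fh y).b 0 (fh y).n
        rw [h1, Con.coe_mul, hy']
        show ((FreeSemigroup.of a : FreeSemigroup Bool) : cg.Quotient) * _ = _
        rw [← Con.coe_mul]
  right_inv := by
    intro s
    rw [F_mk, fh_wrd]
  map_mul' := F_mul


lemma transfer {S T : Type*} [Semigroup S] [Semigroup T] (e : S ≃* T)
    (hT : RightNoetherian T) : RightNoetherian S := by
  classical
  intro r hr
  have hr2c : IsRightCongruence (fun x y : T => r (e.symm x) (e.symm y)) := by
    refine ⟨⟨fun x => hr.1.refl _, fun h => hr.1.symm h, fun h1 h2 => hr.1.trans h1 h2⟩, ?_⟩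
    intro a b c h
    have h2 := hr.2 _ _ (e.symm c) h
    simpa [map_mul] using h2
  obtain ⟨_, X2, hX2r, hX2min⟩ := hT _ hr2c
  refine ⟨hr, X2.image (fun p => (e.symm p.1, e.symm p.2)), ?_, ?_⟩
  · intro p hp
    simp only [Finset.mem_image] at hp
    obtain ⟨q, hq, rfl⟩ := hp
    exact hX2r q hq
  · intro r' hr'c hmem a b hab
    have hr2'c : IsRightCongruence (fun x y : T => r' (e.symm x) (e.symm y)) := by
      refine ⟨⟨fun x => hr'c.1.refl _, fun h => hr'c.1.symm h,
        fun h1 h2 => hr'c.1.trans h1 h2⟩, ?_⟩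
      intro a b c h
      have h2 := hr'c.2 _ _ (e.symm c) h
      simpa [map_mul] using h2
    have hmem2 : ∀ p ∈ X2, r' (e.symm p.1) (e.symm p.2) := fun p hp =>
      hmem (e.symm p.1, e.symm p.2) (Finset.mem_image_of_mem _ hp)
    have h3 := hX2min _ hr2'c hmem2 (e a) (e b) (by simpa using hab)
    simpa using h3

end RNP

theorem freeProduct_of_trivial_rightNoetherian :
    RightNoetherian (conGen idempotentRel).Quotient :=
  RNP.transfer RNP.E RNP.model_rn
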